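/- For every real k with 0 < k < 1, letting k' = sqrt(1-k²), one has ∫₀^{π/2} ln(1 - k²·sin²x)/sqrt(1 - k²·sin²x) dx = K(k)·ln(k'). -/

import Mathlib

open Real intervalIntegral Set

set_option maxHeartbeats 1000000

theorem stmt_18 (k : ℝ) (hk0 : 0 < k) (hk1 : k < 1) :
    ∫ x in (0:ℝ)..(Real.pi / 2),
        Real.log (1 - k ^ 2 * Real.sin x ^ 2) / Real.sqrt (1 - k ^ 2 * Real.sin x ^ 2) =
      (∫ t in (0:ℝ)..(Real.pi / 2), 1 / Real.sqrt (1 - k ^ 2 * Real.sin t ^ 2)) *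
        Real.log (Real.sqrt (1 - k ^ 2)) := by
  have hk2 : k ^ 2 < 1 := by nlinarith
  have hc0 : (0:ℝ) < 1 - k ^ 2 := by nlinarith
  have hs_pos : ∀ x : ℝ, 0 < 1 - k ^ 2 * Real.sin x ^ 2 := by
    intro x
    nlinarith [Real.sin_sq_le_one x, sq_nonneg k, sq_nonneg (Real.sin x)]
  set c := Real.sqrt (1 - k ^ 2) with hc_def
  have hc : 0 < c := Real.sqrt_pos.mpr hc0
  have hc2 : c ^ 2 = 1 - k ^ 2 := Real.sq_sqrt hc0.le
  have hs_cont : Continuous (fun x : ℝ => 1 - k ^ 2 * Real.sin x ^ 2) := by continuity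
  have hsq_pos : ∀ x : ℝ, 0 < Real.sqrt (1 - k ^ 2 * Real.sin x ^ 2) :=
    fun x => Real.sqrt_pos.mpr (hs_pos x)
  have hsq_cont : Continuous (fun x : ℝ => Real.sqrt (1 - k ^ 2 * Real.sin x ^ 2)) :=
    hs_cont.sqrt
  set f : ℝ → ℝ := fun y =>
    Real.log (1 - k ^ 2 * Real.sin y ^ 2) / Real.sqrt (1 - k ^ 2 * Real.sin y ^ 2) with hf_def
  have hf_cont : Continuous f :=
    ((hs_cont.log (fun x => (hs_pos x).ne')).div hsq_cont (fun x => (hsq_pos x).ne'))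
  set φ : ℝ → ℝ := fun x =>
    Real.arcsin (Real.cos x / Real.sqrt (1 - k ^ 2 * Real.sin x ^ 2)) with hφ_def
  set φ' : ℝ → ℝ := fun x => -c / (1 - k ^ 2 * Real.sin x ^ 2) with hφ'_def
  have hφ_cont : Continuous φ :=
    Real.continuous_arcsin.comp (Real.continuous_cos.div hsq_cont fun x => (hsq_pos x).ne')
  have hφ'_cont : Continuous φ' :=
    (continuous_const.div hs_cont fun x => (hs_pos x).ne')
  -- derivative on the open interval
  have hderiv : ∀ x ∈ Ioo (0:ℝ) (Real.pi / 2), HasDerivAt φ (φ' x) x := by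
    intro x hx
    have hsx : 0 < Real.sin x :=
      Real.sin_pos_of_pos_of_lt_pi hx.1 (hx.2.trans (by linarith [Real.pi_pos]))
    have hcx : 0 < Real.cos x := Real.cos_pos_of_mem_Ioo ⟨by linarith [Real.pi_pos, hx.1], hx.2⟩
    have hs : 0 < 1 - k ^ 2 * Real.sin x ^ 2 := hs_pos x
    set D := Real.sqrt (1 - k ^ 2 * Real.sin x ^ 2) with hD_def
    have hD : 0 < D := hsq_pos x
    have hD2 : D ^ 2 = 1 - k ^ 2 * Real.sin x ^ 2 := Real.sq_sqrt hs.le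
    have hds : HasDerivAt (fun y : ℝ => 1 - k ^ 2 * Real.sin y ^ 2)
        (-(k ^ 2 * (2 * Real.sin x * Real.cos x))) x := by
      have h1 : HasDerivAt (fun y : ℝ => Real.sin y ^ 2)
          (2 * Real.sin x ^ 1 * Real.cos x) x := (Real.hasDerivAt_sin x).pow 2
      have := (h1.const_mul (k ^ 2)).const_sub 1
      refine this.congr_deriv ?_
      ring
    have hdD : HasDerivAt (fun y : ℝ => Real.sqrt (1 - k ^ 2 * Real.sin y ^ 2))
        (-(k ^ 2 * (2 * Real.sin x * Real.cos x)) / (2 * D)) x :=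
      hds.sqrt hs.ne'
    have hdg : HasDerivAt (fun y : ℝ => Real.cos y / Real.sqrt (1 - k ^ 2 * Real.sin y ^ 2))
        ((-Real.sin x * D - Real.cos x * (-(k ^ 2 * (2 * Real.sin x * Real.cos x)) / (2 * D)))
          / D ^ 2) x :=
      (Real.hasDerivAt_cos x).div hdD hD.ne'
    have hg_lt : Real.cos x / D < 1 := by
      rw [div_lt_one hD]
      have h2 : Real.cos x ^ 2 < D ^ 2 := by
        rw [hD2]; nlinarith [Real.sin_sq_add_cos_sq x, mul_pos (mul_pos hsx hsx) hc0]
      nlinarith [hcx, hD]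
    have hg_pos : 0 < Real.cos x / D := div_pos hcx hD
    have harc := Real.hasDerivAt_arcsin (x := Real.cos x / D)
      (by linarith) (ne_of_lt hg_lt)
    have hcomp := harc.comp x hdg
    have hsqrt1g : Real.sqrt (1 - (Real.cos x / D) ^ 2) = Real.sin x * c / D := by
      have h1 : 1 - (Real.cos x / D) ^ 2 = (Real.sin x * c / D) ^ 2 := by
        field_simp
        nlinarith [Real.sin_sq_add_cos_sq x, hD2, hc2]
      rw [h1, Real.sqrt_sq (by positivity)]
    refine hcomp.congr_deriv ?_
    rw [hsqrt1g, hφ'_def]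
    beta_reduce
    rw [← hD2]
    field_simp
    linear_combination hc2 - hD2 + k ^ 2 * (Real.sin_sq_add_cos_sq x)
  -- pointwise identity on the closed interval
  have hpt : ∀ x ∈ Set.uIcc (0:ℝ) (Real.pi / 2),
      φ' x • f (φ x) =
        Real.log (1 - k ^ 2 * Real.sin x ^ 2) / Real.sqrt (1 - k ^ 2 * Real.sin x ^ 2)
          - Real.log (1 - k ^ 2) * (1 / Real.sqrt (1 - k ^ 2 * Real.sin x ^ 2)) := by
    intro x hx
    rw [Set.uIcc_of_le (by positivity : (0:ℝ) ≤ Real.pi / 2)] at hx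
    have hcx : 0 ≤ Real.cos x :=
      Real.cos_nonneg_of_mem_Icc ⟨by linarith [hx.1, Real.pi_pos], by linarith [hx.2]⟩
    have hs : 0 < 1 - k ^ 2 * Real.sin x ^ 2 := hs_pos x
    set D := Real.sqrt (1 - k ^ 2 * Real.sin x ^ 2) with hD_def
    have hD : 0 < D := hsq_pos x
    have hD2 : D ^ 2 = 1 - k ^ 2 * Real.sin x ^ 2 := Real.sq_sqrt hs.le
    have hg_le : Real.cos x / D ≤ 1 := by
      rw [div_le_one hD]
      have h2 : Real.cos x ^ 2 ≤ D ^ 2 := by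
        rw [hD2]; nlinarith [Real.sin_sq_add_cos_sq x, sq_nonneg (Real.sin x), sq_nonneg k]
      nlinarith [hcx, hD]
    have hg_ge : (-1:ℝ) ≤ Real.cos x / D := by
      have := div_nonneg hcx hD.le; linarith
    have hsinφ : Real.sin (φ x) = Real.cos x / D := Real.sin_arcsin hg_ge hg_le
    have hsφ : 1 - k ^ 2 * Real.sin (φ x) ^ 2 = (1 - k ^ 2) / (1 - k ^ 2 * Real.sin x ^ 2) := by
      rw [hsinφ]
      rw [div_pow, hD2]
      field_simp
      nlinarith [Real.sin_sq_add_cos_sq x]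
    have hsqφ : Real.sqrt (1 - k ^ 2 * Real.sin (φ x) ^ 2) = c / D := by
      rw [hsφ, show (1 - k ^ 2) / (1 - k ^ 2 * Real.sin x ^ 2) = (c / D) ^ 2 by
        rw [div_pow, hc2, hD2]]
      exact Real.sqrt_sq (by positivity)
    have hlogφ : Real.log (1 - k ^ 2 * Real.sin (φ x) ^ 2)
        = Real.log (1 - k ^ 2) - Real.log (1 - k ^ 2 * Real.sin x ^ 2) := by
      rw [hsφ, Real.log_div hc0.ne' hs.ne']
    simp only [smul_eq_mul, hf_def, hφ'_def]
    rw [hsqφ, hlogφ, ← hD2]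
    field_simp
    ring
  -- change of variables
  have hmin : min (0:ℝ) (Real.pi / 2) = 0 := min_eq_left (by positivity)
  have hmax : max (0:ℝ) (Real.pi / 2) = Real.pi / 2 := max_eq_right (by positivity)
  have hCoV : (∫ x in (0:ℝ)..(Real.pi / 2), φ' x • (f ∘ φ) x)
      = ∫ u in (φ 0)..(φ (Real.pi / 2)), f u := by
    apply intervalIntegral.integral_comp_smul_deriv'' hφ_cont.continuousOn _
      hφ'_cont.continuousOn hf_cont.continuousOn
    rw [hmin, hmax]
    exact fun x hx => (hderiv x hx).hasDerivWithinAt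
  have hφ0 : φ 0 = Real.pi / 2 := by
    have h : φ 0 = Real.arcsin (Real.cos 0 / Real.sqrt (1 - k ^ 2 * Real.sin 0 ^ 2)) := rfl
    rw [h, Real.sin_zero, Real.cos_zero,
      show (1:ℝ) - k ^ 2 * 0 ^ 2 = 1 by ring, Real.sqrt_one, div_one, Real.arcsin_one]
  have hφπ : φ (Real.pi / 2) = 0 := by
    have h : φ (Real.pi / 2) = Real.arcsin (Real.cos (Real.pi / 2) /
        Real.sqrt (1 - k ^ 2 * Real.sin (Real.pi / 2) ^ 2)) := rfl
    rw [h, Real.cos_pi_div_two, zero_div, Real.arcsin_zero]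
  rw [hφ0, hφπ] at hCoV
  have hKint : IntervalIntegrable (fun x : ℝ => 1 / Real.sqrt (1 - k ^ 2 * Real.sin x ^ 2))
      MeasureTheory.volume 0 (Real.pi / 2) :=
    ((continuous_const.div hsq_cont fun x => (hsq_pos x).ne')).intervalIntegrable _ _
  have hIint : IntervalIntegrable f MeasureTheory.volume 0 (Real.pi / 2) :=
    hf_cont.intervalIntegrable _ _
  have hsplit : (∫ x in (0:ℝ)..(Real.pi / 2), φ' x • (f ∘ φ) x)
      = (∫ x in (0:ℝ)..(Real.pi / 2), f x)
        - Real.log (1 - k ^ 2) * ∫ x in (0:ℝ)..(Real.pi / 2),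
            1 / Real.sqrt (1 - k ^ 2 * Real.sin x ^ 2) := by
    simp only [Function.comp_apply]
    rw [intervalIntegral.integral_congr hpt]
    rw [intervalIntegral.integral_sub hIint (hKint.const_mul _)]
    rw [intervalIntegral.integral_const_mul]
  have hsym : (∫ u in (Real.pi / 2)..(0:ℝ), f u) = -∫ u in (0:ℝ)..(Real.pi / 2), f u :=
    intervalIntegral.integral_symm _ _
  rw [hsym] at hCoV
  rw [hsplit] at hCoV
  have hlogc : Real.log c = Real.log (1 - k ^ 2) / 2 := by
    rw [hc_def, Real.log_sqrt hc0.le]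
  rw [hlogc]
  linarith [hCoV]
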